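/- Let S be a compact subset of a Busemann surface (𝒮,d). Then every point u ∈ S has the same eccentricity in conv(S) as in S, i.e., sup{ d(u,v) : v ∈ conv(S) } = sup{ d(u,v) : v ∈ S }. Moreover, diam(conv(S)) = diam(S). -/

import Mathlib

open Metric Set

section Defs

variable {X : Type*} [MetricSpace X]

/-- `γ` is a geodesic parametrized by arclength on the interval `[0, l]`. -/
def IsGeodesicMap (γ : ℝ → X) (l : ℝ) : Prop :=
  ∀ s ∈ Set.Icc (0 : ℝ) l, ∀ t ∈ Set.Icc (0 : ℝ) l, dist (γ s) (γ t) = |s - t|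

/-- A geodesic metric space: every pair of points is joined by a geodesic. -/
def IsGeodesicSpace (X : Type*) [MetricSpace X] : Prop :=
  ∀ x y : X, ∃ γ : ℝ → X, IsGeodesicMap γ (dist x y) ∧ γ 0 = x ∧ γ (dist x y) = y

/-- A Busemann space: a geodesic metric space in which the distance between
any two (affinely reparametrized) geodesics is convex. -/
def IsBusemannSpace (X : Type*) [MetricSpace X] : Prop :=
  IsGeodesicSpace X ∧
    ∀ (γ γ' : ℝ → X) (l l' : ℝ), 0 ≤ l → 0 ≤ l' →
      IsGeodesicMap γ l → IsGeodesicMap γ' l' →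
        ∀ t ∈ Set.Icc (0 : ℝ) 1,
          dist (γ (t * l)) (γ' (t * l')) ≤
            (1 - t) * dist (γ 0) (γ' 0) + t * dist (γ l) (γ' l')

/-- A Busemann surface: a Busemann space homeomorphic to the Euclidean plane. -/
def IsBusemannSurface (X : Type*) [MetricSpace X] : Prop :=
  IsBusemannSpace X ∧ Nonempty (X ≃ₜ EuclideanSpace ℝ (Fin 2))

/-- The covering number `ρ_δ(S)`: the least number of closed balls of radius `δ`
(centered at arbitrary points of `X`) needed to cover `S`. -/
noncomputable def covNum (δ : ℝ) (S : Set X) : ℕ∞ :=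
  sInf {n : ℕ∞ | ∃ T : Set X, T.encard = n ∧ S ⊆ ⋃ x ∈ T, Metric.closedBall x δ}

/-- The packing number `ν_δ(S)`: the largest cardinality of a subset `P ⊆ S`
whose points are pairwise at distance `> 2δ`. -/
noncomputable def packNum (δ : ℝ) (S : Set X) : ℕ∞ :=
  sSup {n : ℕ∞ | ∃ P : Set X, P ⊆ S ∧ P.encard = n ∧
    P.Pairwise fun p q => 2 * δ < dist p q}

/-- The geodesic segment `[x,y]` in a (uniquely geodesic) metric space. -/
def seg (x y : X) : Set X := {z | dist x z + dist z y = dist x y}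

/-- A set is (geodesically) convex if it contains the segment between any two of its points. -/
def GConvex (C : Set X) : Prop := ∀ x ∈ C, ∀ y ∈ C, seg x y ⊆ C

/-- The (geodesic) convex hull of a set. -/
def gHull (Q : Set X) : Set X := ⋂₀ {C : Set X | GConvex C ∧ Q ⊆ C}

/-- The triangle `Δ(x,y,z)`: the convex hull of `{x,y,z}`. -/
def triangleG (x y z : X) : Set X := gHull {x, y, z}

/-- The perimeter `π(a,b,c)` of a triangle. -/
def perim (a b c : X) : ℝ := dist a b + dist b c + dist c a

/-- Three points are collinear if one lies on the geodesic segment between the other two. -/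
def CollinearPts (a b c : X) : Prop := b ∈ seg a c ∨ a ∈ seg b c ∨ c ∈ seg a b

/-- A geodesic line: the image of an isometric embedding of `ℝ`. -/
def IsGeodesicLine (L : Set X) : Prop := ∃ γ : ℝ → X, Isometry γ ∧ L = Set.range γ

/-- A closed halfplane determined by the line `L`: the union of `L` with a
connected component of its complement. -/
def IsHalfplane (L H : Set X) : Prop :=
  ∃ p, p ∉ L ∧ H = connectedComponentIn Lᶜ p ∪ L

/-- The line `L` separates `A` from `B`: they lie in different closed halfplanes of `L`. -/
def LineSep (L A B : Set X) : Prop :=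
  ∃ H₁ H₂ : Set X, IsHalfplane L H₁ ∧ IsHalfplane L H₂ ∧ H₁ ≠ H₂ ∧ A ⊆ H₁ ∧ B ⊆ H₂

/-- The shade `Sh_u(x,y)` of the segment `[x,y]` with respect to `u`. -/
def Shade (u x y : X) : Set X :=
  {p | (seg u p ∩ seg x y).Nonempty ∧
    ∃ L : Set X, IsGeodesicLine L ∧ u ∈ L ∧ p ∈ L ∧ LineSep L {x} {y}}

/-- The shade `St_u(x,y,z)` of the triangle `Δ(x,y,z)` with respect to `u`. -/
def TriShade (u x y z : X) : Set X := Shade u x y ∪ Shade u y z ∪ Shade u z x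

end Defs

section Aux

variable {X : Type*} [MetricSpace X]

lemma subset_gHull (S : Set X) : S ⊆ gHull S :=
  fun x hx => Set.mem_sInter.2 fun _C hC => hC.2 hx

lemma gHull_subset {S C : Set X} (hC : GConvex C) (hSC : S ⊆ C) : gHull S ⊆ C :=
  Set.sInter_subset_of_mem ⟨hC, hSC⟩

/-- In a Busemann space, closed balls are geodesically convex. -/
lemma gconvex_closedBall (hX : IsBusemannSpace X) (c : X) (r : ℝ) :
    GConvex (Metric.closedBall c r) := by
  intro x hx y hy z hz
  simp only [Metric.mem_closedBall] at hx hy ⊢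
  have hz' : dist x z + dist z y = dist x y := hz
  set a := dist x z with ha
  set b := dist z y with hb
  have ha0 : 0 ≤ a := dist_nonneg
  have hb0 : 0 ≤ b := dist_nonneg
  obtain ⟨γ₁, hγ₁, hγ₁0, hγ₁a⟩ := hX.1 x z
  obtain ⟨γ₂, hγ₂, hγ₂0, hγ₂b⟩ := hX.1 z y
  -- concatenated geodesic
  set γ : ℝ → X := fun s => if s ≤ a then γ₁ s else γ₂ (s - a) with hγdef
  have hγa : γ a = z := by simp [hγdef, hγ₁a]; rw [ha, hγ₁a]
  have hγ0 : γ 0 = x := by simp [hγdef, ha0, hγ₁0]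
  have hγl : γ (a + b) = y := by
    rcases eq_or_lt_of_le hb0 with hb' | hb'
    · have hzy : z = y := by
        have := dist_eq_zero.mp hb'.symm
        exact this
      simp [hγdef, ← hb', hγ₁a, hzy]; rw [ha, hγ₁a, hzy]
    · have : ¬ (a + b ≤ a) := by linarith
      simp [hγdef, this, hγ₂b]; rw [hb, hγ₂b]
  have hgeo : IsGeodesicMap γ (a + b) := by
    intro s hs t ht
    have key : ∀ s ∈ Set.Icc (0:ℝ) (a+b), ∀ t ∈ Set.Icc (0:ℝ) (a+b),
        s ≤ a → ¬ t ≤ a → dist (γ s) (γ t) = |s - t| := by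
      intro s hs t ht hsa hta
      push_neg at hta
      have hs0 : 0 ≤ s := hs.1
      have ht1 : t ≤ a + b := ht.2
      have h1 : γ s = γ₁ s := by simp [hγdef, hsa]
      have h2 : γ t = γ₂ (t - a) := by simp [hγdef, not_le.mpr hta]
      have hsIcc : s ∈ Set.Icc (0:ℝ) a := ⟨hs0, hsa⟩
      have htIcc : t - a ∈ Set.Icc (0:ℝ) b := ⟨by linarith, by linarith⟩
      have d1 : dist (γ₁ s) z = a - s := by
        have := hγ₁ s hsIcc a ⟨le_refl 0 |>.trans ha0, le_refl a⟩
        rw [hγ₁a] at this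
        rw [this, abs_of_nonpos (by linarith)]; ring
      have d1' : dist x (γ₁ s) = s := by
        have := hγ₁ 0 ⟨le_refl 0, ha0⟩ s hsIcc
        rw [hγ₁0] at this
        rw [this, abs_of_nonpos (by linarith)]; ring
      have d2 : dist z (γ₂ (t - a)) = t - a := by
        have := hγ₂ 0 ⟨le_refl 0, hb0⟩ (t - a) htIcc
        rw [hγ₂0] at this
        rw [this, abs_of_nonpos (by linarith)]; ring
      have d2' : dist (γ₂ (t - a)) y = a + b - t := by
        have := hγ₂ (t - a) htIcc b ⟨hb0, le_refl b⟩
        rw [hγ₂b] at this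
        rw [this, abs_of_nonpos (by linarith)]; ring
      have hle : dist (γ₁ s) (γ₂ (t - a)) ≤ t - s := by
        calc dist (γ₁ s) (γ₂ (t - a)) ≤ dist (γ₁ s) z + dist z (γ₂ (t - a)) :=
              dist_triangle _ _ _
          _ = t - s := by rw [d1, d2]; ring
      have hge : t - s ≤ dist (γ₁ s) (γ₂ (t - a)) := by
        have htri : dist x y ≤ dist x (γ₁ s) + dist (γ₁ s) (γ₂ (t - a)) + dist (γ₂ (t - a)) y := by
          calc dist x y ≤ dist x (γ₂ (t - a)) + dist (γ₂ (t - a)) y := dist_triangle _ _ _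
            _ ≤ (dist x (γ₁ s) + dist (γ₁ s) (γ₂ (t - a))) + dist (γ₂ (t - a)) y := by
                have := dist_triangle x (γ₁ s) (γ₂ (t - a))
                linarith
        rw [← hz', d1', d2'] at htri
        linarith
      rw [h1, h2, abs_of_nonpos (by linarith : s - t ≤ 0)]
      linarith
    by_cases hsa : s ≤ a <;> by_cases hta : t ≤ a
    · have h1 : γ s = γ₁ s := by simp [hγdef, hsa]
      have h2 : γ t = γ₁ t := by simp [hγdef, hta]
      rw [h1, h2]
      exact hγ₁ s ⟨hs.1, hsa⟩ t ⟨ht.1, hta⟩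
    · exact key s hs t ht hsa hta
    · rw [dist_comm, abs_sub_comm]
      exact key t ht s hs hta hsa
    · have h1 : γ s = γ₂ (s - a) := by simp [hγdef, hsa]
      have h2 : γ t = γ₂ (t - a) := by simp [hγdef, hta]
      push_neg at hsa hta
      rw [h1, h2]
      have := hγ₂ (s - a) ⟨by linarith, by linarith [hs.2]⟩ (t - a)
        ⟨by linarith, by linarith [ht.2]⟩
      rw [this]
      congr 1; ring
  -- constant geodesic at c
  have hconst : IsGeodesicMap (fun _ : ℝ => c) 0 := by
    intro s hs t ht
    have hs0 : s = 0 := le_antisymm hs.2 hs.1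
    have ht0 : t = 0 := le_antisymm ht.2 ht.1
    simp [hs0, ht0]
  rcases eq_or_lt_of_le (by linarith : (0:ℝ) ≤ a + b) with hl | hl
  · have hax : a = 0 := by linarith
    have : z = x := by
      have : dist x z = 0 := by rw [← ha, hax]
      exact (dist_eq_zero.mp this).symm
    rw [this]; exact hx
  · set t₀ : ℝ := a / (a + b) with ht₀
    have ht₀01 : t₀ ∈ Set.Icc (0:ℝ) 1 := ⟨div_nonneg ha0 (by linarith),
      (div_le_one hl).mpr (by linarith)⟩
    have hbus := hX.2 γ (fun _ => c) (a + b) 0 (by linarith) le_rfl hgeo hconst t₀ ht₀01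
    have htl : t₀ * (a + b) = a := by
      rw [ht₀]; field_simp [hl.ne']
    rw [htl, hγa, hγ0, hγl] at hbus
    calc dist z c ≤ (1 - t₀) * dist x c + t₀ * dist y c := hbus
      _ ≤ (1 - t₀) * r + t₀ * r := by
          have h1 : 0 ≤ 1 - t₀ := by linarith [ht₀01.2]
          have h2 : 0 ≤ t₀ := ht₀01.1
          gcongr
      _ = r := by ring

end Aux

/-- taking the convex hull preserves eccentricities and the diameter. -/
theorem eccentricity_and_diam_gHull {X : Type*} [MetricSpace X]
    (hX : IsBusemannSurface X) (S : Set X) (hS : IsCompact S)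
    (u : X) (hu : u ∈ S) :
    sSup (dist u '' gHull S) = sSup (dist u '' S) ∧
      Metric.diam (gHull S) = Metric.diam S := by
  have hB : IsBusemannSpace X := hX.1
  have hSne : S.Nonempty := ⟨u, hu⟩
  have hbdd : Bornology.IsBounded S := hS.isBounded
  -- generic hull-in-ball lemma
  have hull_ball : ∀ (p : X) (r : ℝ), (∀ v ∈ S, dist v p ≤ r) →
      ∀ w ∈ gHull S, dist w p ≤ r := by
    intro p r hr w hw
    have : gHull S ⊆ Metric.closedBall p r :=
      gHull_subset (gconvex_closedBall hB p r) (fun v hv => Metric.mem_closedBall.mpr (hr v hv))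
    exact Metric.mem_closedBall.mp (this hw)
  -- eccentricity part
  have hcomp : IsCompact (dist u '' S) := hS.image (continuous_const.dist continuous_id)
  have hbddS : BddAbove (dist u '' S) := hcomp.bddAbove
  have hecc : ∀ w ∈ gHull S, dist u w ≤ sSup (dist u '' S) := by
    intro w hw
    rw [dist_comm]
    refine hull_ball u _ ?_ w hw
    intro v hv
    rw [dist_comm]
    exact le_csSup hbddS ⟨v, hv, rfl⟩
  have himg : dist u '' S ⊆ dist u '' gHull S := Set.image_mono (subset_gHull S)
  have h1 : sSup (dist u '' gHull S) = sSup (dist u '' S) := by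
    apply le_antisymm
    · apply Real.sSup_le
      · rintro _ ⟨w, hw, rfl⟩
        exact hecc w hw
      · exact Real.sSup_nonneg (by rintro _ ⟨v, hv, rfl⟩; exact dist_nonneg)
    · exact csSup_le_csSup ⟨sSup (dist u '' S), fun d hd => by
          obtain ⟨w, hw, rfl⟩ := hd; exact hecc w hw⟩ (hSne.image _) himg
  refine ⟨h1, ?_⟩
  -- diameter part
  have step1 : ∀ s ∈ S, ∀ w ∈ gHull S, dist w s ≤ Metric.diam S := by
    intro s hsS
    exact hull_ball s _ (fun v hv => Metric.dist_le_diam_of_mem hbdd hv hsS)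
  have step2 : ∀ w ∈ gHull S, ∀ w' ∈ gHull S, dist w' w ≤ Metric.diam S := by
    intro w hw
    exact hull_ball w _ (fun v hv => by rw [dist_comm]; exact step1 v hv w hw)
  have hle : Metric.diam (gHull S) ≤ Metric.diam S :=
    Metric.diam_le_of_forall_dist_le Metric.diam_nonneg
      (fun x hx y hy => by rw [dist_comm]; exact step2 x hx y hy)
  have hbddH : Bornology.IsBounded (gHull S) := by
    have : gHull S ⊆ Metric.closedBall u (sSup (dist u '' S)) := by
      intro w hw
      exact Metric.mem_closedBall.mpr (by rw [dist_comm]; exact hecc w hw)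
    exact (Metric.isBounded_closedBall).subset this
  exact le_antisymm hle (Metric.diam_mono (subset_gHull S) hbddH)
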